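/- Let T be a tree and e = {u,v} an edge of T. Then |V(T_e(u))| > |V(T_e(v))| if and only if the centroid C_d(T) is contained in V(T_e(u)), where T_e(u) denotes the component of T − e containing u. -/

import Mathlib

open SimpleGraph Finset

/-- For an edge `{u,v}` of a tree `G`, the vertex set of the component `T_e(u)` of `G - e`
containing `u`: the vertices strictly closer to `u` than to `v`. -/
def sideOf {V : Type*} (G : SimpleGraph V) (u v : V) : Set V :=
  {w | G.dist w u < G.dist w v}

/-- Number of vertices of the branch of `G` at `v` towards its neighbour `u`. -/
noncomputable def branchSize {V : Type*} [Fintype V] (G : SimpleGraph V) (v u : V) : ℕ :=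
  (Finset.univ.filter (fun w => G.dist w u < G.dist w v)).card

/-- The weight of a vertex `v`: the maximum number of edges of a branch of the tree at `v`. -/
noncomputable def weight {V : Type*} [Fintype V] (G : SimpleGraph V) [DecidableRel G.Adj]
    (v : V) : ℕ :=
  (G.neighborFinset v).sup (fun u => branchSize G v u)

/-- The centroid of a tree: the set of vertices of minimum weight. -/
noncomputable def centroid {V : Type*} [Fintype V] (G : SimpleGraph V) [DecidableRel G.Adj] :
    Set V :=
  {v | ∀ u, weight G v ≤ weight G u}

section Aux

variable {V : Type*} {G : SimpleGraph V}

/-- In a tree, every path realizes the distance between its endpoints. -/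
private lemma path_length_eq_dist (hT : G.IsTree) {x y : V}
    (p : G.Walk x y) (hp : p.IsPath) : p.length = G.dist x y := by
  classical
  obtain ⟨q, hq⟩ := hT.isConnected.exists_walk_length_eq_dist x y
  obtain ⟨r, -, hr⟩ := hT.existsUnique_path x y
  have e1 : p = r := hr p hp
  have e2 : q.bypass = r := hr _ q.bypass_isPath
  have h1 : p.length ≤ G.dist x y := by
    rw [e1, ← e2]
    exact hq ▸ q.length_bypass_le
  exact le_antisymm h1 (SimpleGraph.dist_le p)

/-- In a tree, the distances from any vertex to the two endpoints of an edge differ by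
exactly one. -/
private lemma adj_dist_cases (hT : G.IsTree) {x y : V} (hxy : G.Adj x y) (w : V) :
    G.dist w x = G.dist w y + 1 ∨ G.dist w y = G.dist w x + 1 := by
  classical
  obtain ⟨q, hq⟩ := hT.isConnected.exists_walk_length_eq_dist w x
  set p := q.bypass with hpdef
  have hp : p.IsPath := q.bypass_isPath
  have hlen : p.length = G.dist w x := path_length_eq_dist hT p hp
  by_cases hy : y ∈ p.support
  · left
    have hsum : (p.takeUntil y hy).length + (p.dropUntil y hy).length = p.length := by
      rw [← SimpleGraph.Walk.length_append, SimpleGraph.Walk.take_spec]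
    have l1 : (p.takeUntil y hy).length = G.dist w y :=
      path_length_eq_dist hT _ (hp.takeUntil hy)
    have l2 : (p.dropUntil y hy).length = G.dist y x :=
      path_length_eq_dist hT _ (hp.dropUntil hy)
    have hyx : G.dist y x = 1 := SimpleGraph.dist_eq_one_iff_adj.mpr hxy.symm
    omega
  · right
    have hcon : (p.concat hxy).IsPath := by
      rw [SimpleGraph.Walk.isPath_def, SimpleGraph.Walk.support_concat]
      simp [List.nodup_append, hp.support_nodup, hy]
      exact fun a ha hay => hy (hay ▸ ha)
    have h2 := path_length_eq_dist hT _ hcon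
    rw [SimpleGraph.Walk.length_concat] at h2
    omega

/-- In a connected graph, from any vertex at positive distance from `z` there is a neighbour
strictly closer to `z`. -/
private lemma exists_gate (hc : G.Connected) {x z : V} (h : G.dist x z ≠ 0) :
    ∃ y, G.Adj x y ∧ G.dist y z + 1 = G.dist x z := by
  obtain ⟨q, hq⟩ := hc.exists_walk_length_eq_dist x z
  cases q with
  | nil => simp at h
  | @cons _ y _ h' q' =>
    refine ⟨y, h', ?_⟩
    have h1 : G.dist y z ≤ q'.length := SimpleGraph.dist_le q'
    have h2 : G.dist x z ≤ G.dist x y + G.dist y z := hc.dist_triangle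
    have h3 : G.dist x y = 1 := SimpleGraph.dist_eq_one_iff_adj.mpr h'
    simp only [SimpleGraph.Walk.length_cons] at hq
    omega

/-- In a tree, the neighbour strictly closer to a given target is unique. -/
private lemma gate_unique (hT : G.IsTree) {y w t1 t2 : V} (h1 : G.Adj y t1) (h2 : G.Adj y t2)
    (d1 : G.dist w t1 + 1 = G.dist w y) (d2 : G.dist w t2 + 1 = G.dist w y) : t1 = t2 := by
  classical
  have key : ∀ (t : V) (ht : G.Adj y t), G.dist w t + 1 = G.dist w y →
      ∃ P : G.Walk t w, (Walk.cons ht P).IsPath ∧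
        P.length = G.dist t w := by
    intro t ht hd
    obtain ⟨q, hq⟩ := hT.isConnected.exists_walk_length_eq_dist t w
    refine ⟨q.bypass, ?_, path_length_eq_dist hT _ q.bypass_isPath⟩
    rw [SimpleGraph.Walk.cons_isPath_iff]
    refine ⟨q.bypass_isPath, fun hy => ?_⟩
    -- if y were on the path from t to w, then dist y w ≤ dist t w, contradiction
    have hlen : q.bypass.length = G.dist t w := path_length_eq_dist hT _ q.bypass_isPath
    have l1 : (q.bypass.takeUntil y hy).length = G.dist t y :=
      path_length_eq_dist hT _ (q.bypass_isPath.takeUntil hy)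
    have l2 : (q.bypass.dropUntil y hy).length = G.dist y w :=
      path_length_eq_dist hT _ (q.bypass_isPath.dropUntil hy)
    have hsum : (q.bypass.takeUntil y hy).length + (q.bypass.dropUntil y hy).length
        = q.bypass.length := by
      rw [← SimpleGraph.Walk.length_append, SimpleGraph.Walk.take_spec]
    have c1 : G.dist t w = G.dist w t := SimpleGraph.dist_comm
    have c2 : G.dist y w = G.dist w y := SimpleGraph.dist_comm
    omega
  obtain ⟨P1, hP1, -⟩ := key t1 h1 d1
  obtain ⟨P2, hP2, -⟩ := key t2 h2 d2
  obtain ⟨r, -, hr⟩ := hT.existsUnique_path y w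
  have heq : Walk.cons h1 P1 = Walk.cons h2 P2 := by
    rw [hr _ hP1, hr _ hP2]
  have hs := congrArg SimpleGraph.Walk.support heq
  rw [SimpleGraph.Walk.support_cons, SimpleGraph.Walk.support_cons,
    P1.support_eq_cons, P2.support_eq_cons] at hs
  simp only [List.cons.injEq] at hs
  exact hs.2.1

variable {u v : V}

/-- For an edge `x x'` crossing the edge `u v` (i.e. `x` on the `u`-side and `x'` on the
`v`-side), the distances match up. -/
private lemma cross_dist_eq (hT : G.IsTree) (huv : G.Adj u v) {x x' : V} (hxx' : G.Adj x x')
    (hx : G.dist x u < G.dist x v) (hx' : G.dist x' v < G.dist x' u) :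
    G.dist x u = G.dist x' v := by
  have e1 := adj_dist_cases hT huv x
  have e2 := adj_dist_cases hT huv x'
  have hd : G.dist x x' = 1 := SimpleGraph.dist_eq_one_iff_adj.mpr hxx'
  have hd' : G.dist x' x = 1 := SimpleGraph.dist_eq_one_iff_adj.mpr hxx'.symm
  have t1 : G.dist x u ≤ G.dist x x' + G.dist x' u := hT.isConnected.dist_triangle
  have t2 : G.dist x' u ≤ G.dist x' x + G.dist x u := hT.isConnected.dist_triangle
  have t3 : G.dist x v ≤ G.dist x x' + G.dist x' v := hT.isConnected.dist_triangle
  have t4 : G.dist x' v ≤ G.dist x' x + G.dist x v := hT.isConnected.dist_triangle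
  omega

/-- The only edge crossing the edge `u v` is `u v` itself. -/
private lemma cross_eq (hT : G.IsTree) (huv : G.Adj u v) {x x' : V} (hxx' : G.Adj x x')
    (hx : G.dist x u < G.dist x v) (hx' : G.dist x' v < G.dist x' u) :
    x = u ∧ x' = v := by
  have hpq := cross_dist_eq hT huv hxx' hx hx'
  by_cases hp0 : G.dist x u = 0
  · exact ⟨hT.isConnected.dist_eq_zero_iff.mp hp0,
      hT.isConnected.dist_eq_zero_iff.mp (by omega)⟩
  · exfalso
    obtain ⟨t, hadj, hgate⟩ := exists_gate hT.isConnected hp0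
    have e1 := adj_dist_cases hT huv x
    have e2 := adj_dist_cases hT huv x'
    rcases adj_dist_cases hT huv t with h | h
    · -- t is on the v-side: edge (x,t) crosses, so dist x u = dist t v, contradiction
      have := cross_dist_eq hT huv hadj hx (by omega)
      omega
    · -- t is on the u-side: both t and x' are gates of x towards v
      have cvt : G.dist v t = G.dist t v := SimpleGraph.dist_comm
      have cvx : G.dist v x = G.dist x v := SimpleGraph.dist_comm
      have cvx' : G.dist v x' = G.dist x' v := SimpleGraph.dist_comm
      have htx' : t = x' := gate_unique hT hadj hxx' (w := v) (by omega) (by omega)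
      rw [htx'] at hgate h
      omega

/-- A geodesic from the `u`-side to the `v`-side passes through `v`. -/
private lemma dist_through_v_aux (hT : G.IsTree) (huv : G.Adj u v) :
    ∀ d w c, G.dist w c = d → G.dist w u < G.dist w v → G.dist c v < G.dist c u →
      G.dist w c = G.dist w v + G.dist v c := by
  intro d
  induction d using Nat.strong_induction_on with
  | _ d ih =>
    intro w c hd hw hc
    have hne : w ≠ c := by
      rintro rfl; omega
    have hdc : G.dist w c ≠ 0 := by
      have := hT.isConnected.pos_dist_of_ne hne; omega
    obtain ⟨t, hadj, hgate⟩ := exists_gate hT.isConnected hdc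
    have htri : G.dist w c ≤ G.dist w v + G.dist v c := hT.isConnected.dist_triangle
    rcases adj_dist_cases hT huv t with h | h
    · -- t is on the v-side: edge (w,t) crosses, so w = u, t = v
      obtain ⟨hwu, htv⟩ := cross_eq hT huv hadj hw (by omega)
      have h1 : G.dist w v = 1 := by
        rw [hwu]; exact SimpleGraph.dist_eq_one_iff_adj.mpr huv
      have h2 : G.dist v c = G.dist t c := by rw [htv]
      omega
    · -- t is on the u-side
      have ht : G.dist t u < G.dist t v := by omega
      have ihc := ih (G.dist t c) (by omega) t c rfl ht hc
      have c1 : G.dist v w = G.dist w v := SimpleGraph.dist_comm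
      have c2 : G.dist v t = G.dist t v := SimpleGraph.dist_comm
      rcases adj_dist_cases hT hadj v with h2 | h2
      · -- dist v w = dist v t + 1 : bad case, contradicts the triangle inequality
        omega
      · -- dist v t = dist v w + 1 is the bad case; dist w v = dist t v + 1 is needed.
        omega

private lemma dist_through_v (hT : G.IsTree) (huv : G.Adj u v) {w c : V}
    (hw : G.dist w u < G.dist w v) (hc : G.dist c v < G.dist c u) :
    G.dist w c = G.dist w v + G.dist v c :=
  dist_through_v_aux hT huv _ w c rfl hw hc

/-- Nesting of branches: a branch at `y` not towards `c` is contained (minus `y`) in the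
branch of `c` towards `y`. -/
private lemma branch_nested (hT : G.IsTree) {c y z : V} (hcy : G.Adj c y) (hyz : G.Adj y z)
    (hzc : z ≠ c) (w : V) (hw : G.dist w z < G.dist w y) :
    G.dist w y < G.dist w c ∧ w ≠ y := by
  have h1 := adj_dist_cases hT hyz w
  have hwy : w ≠ y := by
    rintro rfl
    rw [SimpleGraph.dist_self] at hw
    omega
  refine ⟨?_, hwy⟩
  rcases adj_dist_cases hT hcy w with h2 | h2
  · -- dist w c = dist w y + 1
    omega
  · -- dist w y = dist w c + 1: then both z and c are gates of y towards w: contradiction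
    exfalso
    exact hzc (gate_unique hT hyz hcy.symm (w := w) (by omega) (by omega))

end Aux

section AuxFin

variable {V : Type*} [Fintype V] {G : SimpleGraph V} {u v : V}

private lemma branch_add (hT : G.IsTree) {x y : V} (hxy : G.Adj x y) :
    branchSize G x y + branchSize G y x = Fintype.card V := by
  classical
  have hfc : Finset.univ.filter (fun w => G.dist w x < G.dist w y) =
      Finset.univ.filter (fun w => ¬ G.dist w y < G.dist w x) := by
    apply Finset.filter_congr
    intro w _
    have := adj_dist_cases hT hxy w
    constructor <;> intro <;> omega
  rw [branchSize, branchSize, hfc,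
    Finset.card_filter_add_card_filter_not, Finset.card_univ]

private lemma mem_own_branch (hT : G.IsTree) {c y : V} (hcy : G.Adj c y) :
    y ∈ Finset.univ.filter (fun w => G.dist w y < G.dist w c) := by
  simp only [Finset.mem_filter, Finset.mem_univ, true_and, SimpleGraph.dist_self]
  rw [SimpleGraph.dist_eq_one_iff_adj.mpr hcy.symm]
  omega

private lemma weight_descend [DecidableRel G.Adj] (hT : G.IsTree) {c y : V} (hcy : G.Adj c y)
    (h2 : Fintype.card V < 2 * branchSize G c y) : weight G y < weight G c := by
  classical
  have hw1 : branchSize G c y ≤ weight G c :=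
    Finset.le_sup (by rw [SimpleGraph.mem_neighborFinset]; exact hcy)
  have hpos : 0 < branchSize G c y := by
    rw [branchSize, Finset.card_pos]
    exact ⟨y, mem_own_branch hT hcy⟩
  refine lt_of_lt_of_le ?_ hw1
  rw [weight]
  rw [Finset.sup_lt_iff (by simpa using hpos)]
  intro z hz
  rw [SimpleGraph.mem_neighborFinset] at hz
  by_cases hzc : z = c
  · rw [hzc]
    have hadd := branch_add hT hcy
    omega
  · have hsub : Finset.univ.filter (fun w => G.dist w z < G.dist w y) ⊆
        (Finset.univ.filter (fun w => G.dist w y < G.dist w c)).erase y := by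
      intro w hw
      simp only [Finset.mem_filter, Finset.mem_univ, true_and] at hw
      obtain ⟨ha, hb⟩ := branch_nested hT hcy hz hzc w hw
      rw [Finset.mem_erase]
      exact ⟨hb, by simp only [Finset.mem_filter, Finset.mem_univ, true_and]; exact ha⟩
    have hcard := Finset.card_le_card hsub
    rw [Finset.card_erase_of_mem (mem_own_branch hT hcy)] at hcard
    have : branchSize G y z ≤ branchSize G c y - 1 := hcard
    omega

/-- Any vertex on the `v`-side has a branch containing the whole `u`-side. -/
private lemma exists_big_branch (hT : G.IsTree) (huv : G.Adj u v) {c : V}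
    (hc : G.dist c v < G.dist c u) :
    ∃ y, G.Adj c y ∧ branchSize G v u ≤ branchSize G c y := by
  classical
  by_cases hcv : c = v
  · subst hcv
    exact ⟨u, huv.symm, le_refl _⟩
  · have h0 : G.dist c v ≠ 0 := by
      have := hT.isConnected.pos_dist_of_ne hcv; omega
    obtain ⟨y, hadj, hgate⟩ := exists_gate hT.isConnected h0
    refine ⟨y, hadj, Finset.card_le_card ?_⟩
    intro w hw
    simp only [Finset.mem_filter, Finset.mem_univ, true_and] at hw ⊢
    have hwc := dist_through_v hT huv hw hc
    have cv : G.dist v c = G.dist c v := SimpleGraph.dist_comm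
    by_cases hyv : y = v
    · subst hyv
      omega
    · have hyB : G.dist y v < G.dist y u := by
        rcases adj_dist_cases hT huv y with h | h
        · omega
        · exfalso
          exact hcv (cross_eq hT huv hadj.symm (by omega) hc).2
      have hwy := dist_through_v hT huv hw hyB
      have vy : G.dist v y = G.dist y v := SimpleGraph.dist_comm
      omega

private lemma centroid_in_big [DecidableRel G.Adj] (hT : G.IsTree) (huv : G.Adj u v)
    (hba : branchSize G u v < branchSize G v u) : centroid G ⊆ sideOf G u v := by
  intro c hc
  simp only [_root_.centroid, Set.mem_setOf_eq] at hc
  simp only [sideOf, Set.mem_setOf_eq]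
  rcases adj_dist_cases hT huv c with h | h
  · -- c on the v-side: contradiction
    exfalso
    obtain ⟨y, hadj, hbig⟩ := exists_big_branch hT huv
      (show G.dist c v < G.dist c u by omega)
    have hadd := branch_add hT huv
    have hdes : weight G y < weight G c :=
      weight_descend hT hadj (show Fintype.card V < 2 * branchSize G c y by omega)
    have := hc y
    omega
  · omega

private lemma v_mem_centroid [DecidableRel G.Adj] (hT : G.IsTree) (huv : G.Adj u v)
    (hab : branchSize G u v = branchSize G v u) : v ∈ centroid G := by
  classical
  simp only [_root_.centroid, Set.mem_setOf_eq]
  have hwv : weight G v ≤ branchSize G v u := by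
    rw [weight]
    apply Finset.sup_le
    intro z hz
    rw [SimpleGraph.mem_neighborFinset] at hz
    by_cases hzu : z = u
    · rw [hzu]
    · have hsub : Finset.univ.filter (fun w => G.dist w z < G.dist w v) ⊆
          (Finset.univ.filter (fun w => G.dist w v < G.dist w u)).erase v := by
        intro w hw
        simp only [Finset.mem_filter, Finset.mem_univ, true_and] at hw
        obtain ⟨ha, hb⟩ := branch_nested hT huv hz hzu w hw
        rw [Finset.mem_erase]
        exact ⟨hb, by simp only [Finset.mem_filter, Finset.mem_univ, true_and]; exact ha⟩
      have hcard := Finset.card_le_card hsub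
      rw [Finset.card_erase_of_mem (mem_own_branch hT huv)] at hcard
      have h1 : branchSize G v z ≤ branchSize G u v - 1 := hcard
      omega
  intro x
  refine le_trans hwv ?_
  rcases adj_dist_cases hT huv x with h | h
  · -- x on the v-side
    obtain ⟨y, hadj, hbig⟩ := exists_big_branch hT huv (show G.dist x v < G.dist x u by omega)
    exact le_trans hbig (Finset.le_sup (by rw [SimpleGraph.mem_neighborFinset]; exact hadj))
  · -- x on the u-side
    obtain ⟨y, hadj, hbig⟩ := exists_big_branch hT huv.symm
      (show G.dist x u < G.dist x v by omega)
    rw [hab] at hbig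
    exact le_trans hbig (Finset.le_sup (by rw [SimpleGraph.mem_neighborFinset]; exact hadj))

private lemma ncard_sideOf (G : SimpleGraph V) (u v : V) :
    (sideOf G u v).ncard = branchSize G v u := by
  classical
  rw [branchSize, ← Set.ncard_coe_finset]
  congr 1
  ext w
  simp [sideOf]

end AuxFin

/-- Let `e = {u,v}` be an edge of a tree `T`. Then `|V(T_e(u))| > |V(T_e(v))|` if and only if
the centroid `C_d(T)` is contained in `V(T_e(u))`. -/
theorem centroid_side_iff {V : Type*} [Fintype V] (G : SimpleGraph V) [DecidableRel G.Adj]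
    (hT : G.IsTree) {u v : V} (huv : G.Adj u v) :
    (sideOf G v u).ncard < (sideOf G u v).ncard ↔ centroid G ⊆ sideOf G u v := by
  classical
  rw [ncard_sideOf, ncard_sideOf]
  constructor
  · exact fun h => centroid_in_big hT huv h
  · intro h
    by_contra hba
    have hab : branchSize G u v + branchSize G v u = Fintype.card V := branch_add hT huv
    rcases lt_or_eq_of_le (not_lt.mp hba) with hlt | heq
    · -- strictly more on the v-side: centroid is on the v-side
      have h2 := centroid_in_big hT huv.symm hlt
      obtain ⟨c, -, hcmin⟩ := Finset.exists_min_image Finset.univ (weight G)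
        ⟨u, Finset.mem_univ u⟩
      have hc : c ∈ centroid G := fun x => hcmin x (Finset.mem_univ x)
      have h3 := h hc
      have h4 := h2 hc
      simp only [sideOf, Set.mem_setOf_eq] at h3 h4
      omega
    · -- equal sides: v is in the centroid but not on the u-side
      have hv := h (v_mem_centroid hT huv heq.symm)
      simp only [sideOf, Set.mem_setOf_eq, SimpleGraph.dist_self] at hv
      omega
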